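/- On ℝ⁶ with coordinates (x, y, a, b, c, κ), let Z be the vector field Z(p) = (1, c/a, b/a, κ, (1+b·c)/a², 0), defined on the open set where a ≠ 0, and for a differentiable function h : ℝ⁶ → ℝ let Zh denote the directional derivative p ↦ Dh(p)[Z(p)]. Define z₀(p) = y and z_j = Z z_{j−1} for j = 1, 2, 3, 4. Then at every point p = (x, y, a, b, c, κ) with a ≠ 0: z₁(p) = c/a, z₂(p) = a^(−3), z₃(p) = −3·b·a^(−5), and z₄(p) = 3·(5·b² − a²·κ)·a^(−7). -/

import Mathlib

/-- The total differential operator `Z` on `ℝ⁶` with coordinates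
`(x, y, a, b, c, κ) = (p 0, p 1, p 2, p 3, p 4, p 5)`. -/
noncomputable def Zvf (p : Fin 6 → ℝ) : Fin 6 → ℝ :=
  ![1, p 4 / p 2, p 3 / p 2, p 5, (1 + p 3 * p 4) / (p 2) ^ 2, 0]

/-- Iterated directional derivatives along `Z`, starting from `z₀ = y`. -/
noncomputable def zcoord : ℕ → (Fin 6 → ℝ) → ℝ
  | 0 => fun p => p 1
  | j + 1 => fun p => fderiv ℝ (zcoord j) p (Zvf p)

lemma Zvf2 (p : Fin 6 → ℝ) : Zvf p 2 = p 3 / p 2 := rfl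
lemma Zvf3 (p : Fin 6 → ℝ) : Zvf p 3 = p 5 := rfl
lemma Zvf4 (p : Fin 6 → ℝ) : Zvf p 4 = (1 + p 3 * p 4) / (p 2) ^ 2 := rfl

lemma coordD (i : Fin 6) (p : Fin 6 → ℝ) :
    HasFDerivAt (fun q : Fin 6 → ℝ => q i)
      (ContinuousLinearMap.proj i : (Fin 6 → ℝ) →L[ℝ] ℝ) p :=
  (ContinuousLinearMap.proj i : (Fin 6 → ℝ) →L[ℝ] ℝ).hasFDerivAt

lemma z1_eq (p : Fin 6 → ℝ) : zcoord 1 p = p 4 / p 2 := by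
  show fderiv ℝ (fun q => q 1) p (Zvf p) = _
  rw [(coordD 1 p).fderiv]
  rfl

/-- derivative of `q ↦ (q 2 ^ n)⁻¹`. -/
lemma invpowD (n : ℕ) (q : Fin 6 → ℝ) (hq : q 2 ≠ 0) :
    HasFDerivAt (fun q : Fin 6 → ℝ => (q 2 ^ n)⁻¹)
      ((-(↑n * q 2 ^ (n - 1)) / (q 2 ^ n) ^ 2) •
        (ContinuousLinearMap.proj 2 : (Fin 6 → ℝ) →L[ℝ] ℝ)) q := by
  have h : HasDerivAt (fun x : ℝ => (x ^ n)⁻¹) (-(↑n * q 2 ^ (n - 1)) / (q 2 ^ n) ^ 2)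
      (q 2) := (hasDerivAt_pow n (q 2)).inv (pow_ne_zero n hq)
  have := h.comp_hasFDerivAt q (coordD 2 q); exact this

lemma z2_eq (q : Fin 6 → ℝ) (hq : q 2 ≠ 0) : zcoord 2 q = (q 2 ^ 3)⁻¹ := by
  have h1 : zcoord 1 = fun q : Fin 6 → ℝ => q 4 * (q 2 ^ 1)⁻¹ := by
    funext r; rw [z1_eq]; ring
  have hd : HasFDerivAt (fun q : Fin 6 → ℝ => q 4 * (q 2 ^ 1)⁻¹) _ q := (coordD 4 q).mul (invpowD 1 q hq)
  show fderiv ℝ (zcoord 1) q (Zvf q) = _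
  rw [h1, hd.fderiv]
  simp only [ContinuousLinearMap.add_apply, ContinuousLinearMap.coe_smul',
    ContinuousLinearMap.coe_comp', Function.comp_apply, Pi.smul_apply,
    ContinuousLinearMap.proj_apply, ContinuousLinearMap.smulRight_apply,
    ContinuousLinearMap.one_apply, smul_eq_mul, Zvf4, Zvf2]
  field_simp
  ring

lemma hopen : IsOpen {r : Fin 6 → ℝ | r 2 ≠ 0} :=
  isOpen_compl_singleton.preimage (continuous_apply 2)

lemma z3_eq (q : Fin 6 → ℝ) (hq : q 2 ≠ 0) : zcoord 3 q = -3 * q 3 * (q 2 ^ 5)⁻¹ := by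
  have hev : zcoord 2 =ᶠ[nhds q] fun r => (r 2 ^ 3)⁻¹ :=
    Filter.eventuallyEq_of_mem (hopen.mem_nhds hq) fun r hr => z2_eq r hr
  show fderiv ℝ (zcoord 2) q (Zvf q) = _
  rw [hev.fderiv_eq, (invpowD 3 q hq).fderiv]
  simp only [ContinuousLinearMap.coe_smul', Pi.smul_apply,
    ContinuousLinearMap.proj_apply, smul_eq_mul, Zvf2]
  field_simp
  ring

lemma z4_eq (q : Fin 6 → ℝ) (hq : q 2 ≠ 0) :
    zcoord 4 q = 3 * (5 * q 3 ^ 2 - q 2 ^ 2 * q 5) * (q 2 ^ 7)⁻¹ := by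
  have hev : zcoord 3 =ᶠ[nhds q] fun r => -3 * r 3 * (r 2 ^ 5)⁻¹ :=
    Filter.eventuallyEq_of_mem (hopen.mem_nhds hq) fun r hr => z3_eq r hr
  have hd : HasFDerivAt (fun r : Fin 6 → ℝ => -3 * r 3 * (r 2 ^ 5)⁻¹) _ q :=
    ((coordD 3 q).const_mul (-3 : ℝ)).mul (invpowD 5 q hq)
  show fderiv ℝ (zcoord 3) q (Zvf q) = _
  rw [hev.fderiv_eq, hd.fderiv]
  simp only [ContinuousLinearMap.add_apply, ContinuousLinearMap.coe_smul',
    Pi.smul_apply, ContinuousLinearMap.proj_apply, smul_eq_mul, Zvf2, Zvf3]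
  field_simp
  ring

/-- The contact coordinates produced by repeated differentiation of `z₀ = y`
along `Z` are `z₁ = c/a`, `z₂ = a⁻³`, `z₃ = -3 b a⁻⁵`, `z₄ = 3(5b² - a²κ)a⁻⁷`. -/
theorem contact_coordinates_equiaffine_plane (p : Fin 6 → ℝ) (hp : p 2 ≠ 0) :
    zcoord 1 p = p 4 / p 2 ∧
    zcoord 2 p = (p 2) ^ (-(3 : ℤ)) ∧
    zcoord 3 p = -3 * p 3 * (p 2) ^ (-(5 : ℤ)) ∧
    zcoord 4 p = 3 * (5 * (p 3) ^ 2 - (p 2) ^ 2 * p 5) * (p 2) ^ (-(7 : ℤ)) := by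
  refine ⟨z1_eq p, ?_, ?_, ?_⟩
  · rw [z2_eq p hp, zpow_neg, zpow_ofNat]
  · rw [z3_eq p hp, zpow_neg, zpow_ofNat]
  · rw [z4_eq p hp, zpow_neg, zpow_ofNat]
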